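/- Let Γ be a signed graph on n vertices with λ₁(Γ) > n − k, and let x be a unit eigenvector of A(Γ) corresponding to λ₁(Γ). Then x has at most k − 2 zero components. -/

import Mathlib

/-- The largest eigenvalue (index) of a real symmetric matrix. -/
noncomputable def lam1 {n : ℕ} (A : Matrix (Fin n) (Fin n) ℝ) (hA : A.IsHermitian) : ℝ :=
  ⨆ i, hA.eigenvalues i

/-- If `Γ` is a signed graph on `n` vertices with `λ₁(Γ) > n − k` and `x` is a unit eigenvector
for `λ₁(Γ)`, then `x` has at most `k − 2` zero components. -/
theorem stmt3 {n k : ℕ} (A : Matrix (Fin n) (Fin n) ℝ) (hA : A.IsHermitian)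
    (hdiag : ∀ i, A i i = 0)
    (hent : ∀ i j, A i j = -1 ∨ A i j = 0 ∨ A i j = 1)
    (x : Fin n → ℝ) (hunit : ∑ i, x i ^ 2 = 1)
    (heig : A.mulVec x = lam1 A hA • x)
    (hgt : (n : ℝ) - k < lam1 A hA) :
    ((Finset.univ.filter fun i => x i = 0).card : ℤ) ≤ (k : ℤ) - 2 := by
  classical
  set lam := lam1 A hA with hlam
  set S : Finset (Fin n) := Finset.univ.filter (fun i => ¬ x i = 0) with hS
  set Z : Finset (Fin n) := Finset.univ.filter (fun i => x i = 0) with hZ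
  have hcard : S.card + Z.card = n := by
    rw [hS, hZ, add_comm]
    simpa using Finset.card_filter_add_card_filter_not
      (s := (Finset.univ : Finset (Fin n))) (p := fun i => x i = 0)
  -- λ equals the quadratic form
  have h1 : lam = ∑ i, ∑ j, x i * (A i j * x j) := by
    have h := congrArg (fun v => ∑ i, x i * v i) heig
    simp only [Matrix.mulVec, dotProduct, Pi.smul_apply, smul_eq_mul] at h
    have hr : ∑ i, x i * (lam * x i) = lam := by
      have : ∑ i, x i * (lam * x i) = lam * ∑ i, x i ^ 2 := by
        rw [Finset.mul_sum]; congr 1; ext i; ring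
      rw [this, hunit, mul_one]
    rw [hr] at h
    rw [← h]
    congr 1; ext i; rw [Finset.mul_sum]
  -- sums over S
  have habs : ∑ i, |x i| = ∑ i ∈ S, |x i| := by
    rw [eq_comm]
    apply Finset.sum_subset (Finset.subset_univ _)
    intro i _ hi
    simp only [hS, Finset.mem_filter, Finset.mem_univ, true_and, not_not] at hi
    simp [hi]
  have hsq : ∑ i ∈ S, x i ^ 2 = 1 := by
    rw [← hunit]
    apply Finset.sum_subset (Finset.subset_univ _)
    intro i _ hi
    simp only [hS, Finset.mem_filter, Finset.mem_univ, true_and, not_not] at hi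
    simp [hi]
  -- termwise bound
  have h2 : ∑ i, ∑ j, x i * (A i j * x j)
      ≤ ∑ i, ∑ j, (|x i| * |x j| - if i = j then x i ^ 2 else 0) := by
    apply Finset.sum_le_sum; intro i _
    apply Finset.sum_le_sum; intro j _
    by_cases hij : i = j
    · subst hij
      rw [hdiag i, if_pos rfl, zero_mul, mul_zero, abs_mul_abs_self, sq]
      simp
    · simp only [if_neg hij, sub_zero]
      calc x i * (A i j * x j) ≤ |x i * (A i j * x j)| := le_abs_self _
        _ = |A i j| * (|x i| * |x j|) := by rw [abs_mul, abs_mul]; ring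
        _ ≤ 1 * (|x i| * |x j|) := by
            apply mul_le_mul_of_nonneg_right _ (by positivity)
            rcases hent i j with h | h | h <;> simp [h]
        _ = |x i| * |x j| := one_mul _
  have h3 : ∑ i, ∑ j, (|x i| * |x j| - if i = j then x i ^ 2 else 0)
      = (∑ i, |x i|) ^ 2 - 1 := by
    rw [← hunit]
    rw [Finset.sum_congr rfl (fun i _ => Finset.sum_sub_distrib _ _)]
    rw [Finset.sum_sub_distrib]
    congr 1
    · rw [sq, Finset.sum_mul]
      congr 1; ext i; rw [Finset.mul_sum]
    · congr 1; ext i; simp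
  have h4 : (∑ i, |x i|) ^ 2 ≤ (S.card : ℝ) := by
    rw [habs]
    calc (∑ i ∈ S, |x i|) ^ 2 ≤ S.card * ∑ i ∈ S, |x i| ^ 2 :=
        sq_sum_le_card_mul_sum_sq
      _ = S.card * ∑ i ∈ S, x i ^ 2 := by
          congr 1; apply Finset.sum_congr rfl; intro i _; rw [sq_abs]
      _ = S.card := by rw [hsq, mul_one]
  have hlam_le : lam ≤ (S.card : ℝ) - 1 := by
    rw [h1]; linarith [h2, h3.le, h4]
  have hScard : (S.card : ℝ) = (n : ℝ) - Z.card := by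
    have := hcard
    push_cast [← this]
    ring
  have hfin : (Z.card : ℝ) + 1 < (k : ℝ) := by
    rw [hScard] at hlam_le
    linarith
  have : (Z.card : ℤ) + 1 < (k : ℤ) := by exact_mod_cast hfin
  omega
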